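/- Let K > 0, let ε ∈ ℝ^n be nonzero, let f ∈ ℝ^n be a vector and G an n×m real matrix with ‖f‖ + ‖G‖_F ≤ K‖ε‖. Then −‖ε‖^{−3} ⟨ε, f⟩ + (1/2)( −‖ε‖^{−3} ‖G‖_F² + 3 ‖ε‖^{−5} ‖Gᵀ ε‖² ) ≤ K(1+K) ‖ε‖^{−1}. In other words, under the linear-growth bound, the generator of V(ε,t) = ‖ε‖^{−1} satisfies 𝓛V(ε,t) ≤ K(1+K) V(ε,t). -/

import Mathlib

open scoped RealInnerProductSpace

/-- Frobenius norm of an `n × m` real matrix. -/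
noncomputable def frobNorm {n m : ℕ} (G : Matrix (Fin n) (Fin m) ℝ) : ℝ :=
  Real.sqrt (∑ i, ∑ j, G i j ^ 2)

/-- Euclidean norm of a vector in `ℝ^k`. -/
noncomputable def euclNorm {k : ℕ} (v : Fin k → ℝ) : ℝ :=
  Real.sqrt (∑ i, v i ^ 2)

lemma frobNorm_nonneg {n m : ℕ} (G : Matrix (Fin n) (Fin m) ℝ) : 0 ≤ frobNorm G :=
  Real.sqrt_nonneg _

lemma euclNorm_sq {k : ℕ} (v : Fin k → ℝ) : euclNorm v ^ 2 = ∑ i, v i ^ 2 := by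
  rw [euclNorm, Real.sq_sqrt]
  exact Finset.sum_nonneg fun i _ => sq_nonneg _

lemma frobNorm_sq {n m : ℕ} (G : Matrix (Fin n) (Fin m) ℝ) :
    frobNorm G ^ 2 = ∑ i, ∑ j, G i j ^ 2 := by
  rw [frobNorm, Real.sq_sqrt]
  exact Finset.sum_nonneg fun i _ => Finset.sum_nonneg fun j _ => sq_nonneg _

lemma mulVec_sq_le {n m : ℕ} (G : Matrix (Fin n) (Fin m) ℝ) (v : Fin n → ℝ) :
    euclNorm (G.transpose.mulVec v) ^ 2 ≤ frobNorm G ^ 2 * euclNorm v ^ 2 := by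
  rw [euclNorm_sq, euclNorm_sq, frobNorm_sq, Finset.sum_comm, Finset.sum_mul]
  apply Finset.sum_le_sum
  intro j _
  calc G.transpose.mulVec v j ^ 2 = (∑ i, G i j * v i) ^ 2 := by
        simp [Matrix.mulVec, Matrix.transpose, dotProduct, mul_comm]
    _ ≤ (∑ i, G i j ^ 2) * ∑ i, v i ^ 2 := by
        have := Finset.sum_mul_sq_le_sq_mul_sq Finset.univ (fun i => G i j) v
        simpa [sq] using this

/-- Under the linear-growth bound `‖f‖ + ‖G‖_F ≤ K‖ε‖`, the generator of `V(ε,t) = ‖ε‖⁻¹`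
satisfies `𝓛V(ε,t) ≤ K(1+K)V(ε,t)`, i.e.
`−‖ε‖⁻³⟨ε,f⟩ + (1/2)(−‖ε‖⁻³‖G‖_F² + 3‖ε‖⁻⁵‖Gᵀε‖²) ≤ K(1+K)‖ε‖⁻¹`. -/
theorem generator_bound_of_linear_growth {n m : ℕ} (K : ℝ) (hK : 0 < K)
    (ε f : EuclideanSpace ℝ (Fin n)) (hε : ε ≠ 0)
    (G : Matrix (Fin n) (Fin m) ℝ)
    (hgrowth : ‖f‖ + frobNorm G ≤ K * ‖ε‖) :
    -(‖ε‖ ^ 3)⁻¹ * ⟪ε, f⟫ +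
      (1 / 2) * (-(‖ε‖ ^ 3)⁻¹ * frobNorm G ^ 2 +
        3 * (‖ε‖ ^ 5)⁻¹ * euclNorm (G.transpose.mulVec (fun i => ε i)) ^ 2) ≤
    K * (1 + K) * ‖ε‖⁻¹ := by
  set r := ‖ε‖ with hr_def
  have hr : 0 < r := norm_pos_iff.mpr hε
  have hne : euclNorm (fun i => ε i) = r := by
    rw [euclNorm, hr_def, EuclideanSpace.norm_eq]
    congr 1
    apply Finset.sum_congr rfl
    intro i _
    rw [Real.norm_eq_abs, sq_abs]
  have hG : euclNorm (G.transpose.mulVec (fun i => ε i)) ^ 2 ≤ frobNorm G ^ 2 * r ^ 2 := by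
    have := mulVec_sq_le G (fun i => ε i)
    rwa [hne] at this
  have hinner : -(r * ‖f‖) ≤ ⟪ε, f⟫ := by
    have := abs_real_inner_le_norm ε f
    have := neg_abs_le ⟪ε, f⟫
    nlinarith [abs_real_inner_le_norm ε f, neg_abs_le ⟪ε, f⟫]
  have hf : 0 ≤ ‖f‖ := norm_nonneg _
  have hFn : 0 ≤ frobNorm G := frobNorm_nonneg G
  have hr' : r ≠ 0 := ne_of_gt hr
  rw [← mul_le_mul_iff_of_pos_right (pow_pos hr 5)]
  have hexp : ((r ^ 3)⁻¹ * r ^ 5 = r ^ 2) ∧ ((r ^ 5)⁻¹ * r ^ 5 = 1) ∧ (r⁻¹ * r ^ 5 = r ^ 4) := by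
    constructor
    · field_simp
    constructor
    · field_simp
    · field_simp
  set N := euclNorm (G.transpose.mulVec (fun i => ε i)) ^ 2
  set F := frobNorm G
  have expand : (-(r ^ 3)⁻¹ * ⟪ε, f⟫ + (1 / 2) * (-(r ^ 3)⁻¹ * F ^ 2 +
      3 * (r ^ 5)⁻¹ * N)) * r ^ 5
      = -(r ^ 2) * ⟪ε, f⟫ + (1/2) * (-(r^2) * F^2 + 3 * N) := by
    field_simp
  rw [expand]
  have hrhs : K * (1 + K) * r⁻¹ * r ^ 5 = K * (1 + K) * r ^ 4 := by
    field_simp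
  rw [hrhs]
  have h1 : ‖f‖ ≤ K * r := by linarith
  have h2 : F ≤ K * r := by linarith
  have h3 : F ^ 2 ≤ (K * r) ^ 2 := by nlinarith
  nlinarith [mul_le_mul_of_nonneg_left hinner (sq_nonneg r),
    mul_le_mul_of_nonneg_left h1 (le_of_lt (pow_pos hr 3)),
    mul_le_mul_of_nonneg_right h3 (sq_nonneg r), sq_nonneg r]
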